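/- arXiv:0805.0359 — 3 statements merged into one kernel-verified Lean document; each statement's English description precedes it below -/
import Mathlib

section
/- For a local ring R, M₂(R) is strongly clean if and only if every monic quadratic polynomial f over R admits factorizations f = g₀g₁ = h₁h₀ into monic polynomials with g₀(0), g₁(1), h₀(0), h₁(1) all units of R. -/
set_option linter.unusedSectionVars false
open Polynomial
def IsStronglyClean {S : Type*} [Ring S] (a : S) : Prop :=
  ∃ e u : S, IsIdempotentElem e ∧ IsUnit u ∧ a = e + u ∧ e * u = u * e


section Main
variable {R : Type*} [Ring R]

local notation "M2" => Matrix (Fin 2) (Fin 2) R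

section LocalFacts
variable [IsLocalRing R]

lemma loc_or (a : R) : IsUnit a ∨ IsUnit (1 - a) :=
  IsLocalRing.isUnit_or_isUnit_of_add_one (by rw [add_sub_cancel])

lemma idem01 {e : R} (h : e * e = e) : e = 0 ∨ e = 1 := by
  rcases loc_or e with hu | hu
  · right
    exact hu.mul_left_cancel (by rw [h, mul_one])
  · left
    have h0 : e * (1 - e) = 0 := by rw [mul_sub, mul_one, h, sub_self]
    rcases hu with ⟨u, hu⟩
    have h2 : e * (1 - e) * ↑u⁻¹ = 0 := by rw [h0, zero_mul]
    rwa [← hu, mul_assoc, Units.mul_inv, mul_one] at h2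

lemma one_sided {x y : R} (h : x * y = 1) : y * x = 1 := by
  rcases idem01 (e := y * x) (by rw [mul_assoc, ← mul_assoc x, h, one_mul]) with h0 | h1
  · exfalso
    have e1 : x * (y * x) * y = 0 := by rw [h0, mul_zero, zero_mul]
    have e2 : x * (y * x) * y = (x * y) * (x * y) := by noncomm_ring
    rw [e2, h, one_mul] at e1
    exact one_ne_zero e1
  · exact h1

lemma unit_of_mul_left {a b : R} (h : IsUnit (a * b)) : IsUnit a := by
  rcases h with ⟨u, hu⟩
  have : a * (b * ↑u⁻¹) = 1 := by rw [← mul_assoc, ← hu, Units.mul_inv]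
  exact ⟨⟨a, b * ↑u⁻¹, this, one_sided this⟩, rfl⟩

lemma unit_of_mul_right {a b : R} (h : IsUnit (a * b)) : IsUnit b := by
  rcases h with ⟨u, hu⟩
  have : (↑u⁻¹ * a) * b = 1 := by rw [mul_assoc, ← hu, Units.inv_mul]
  exact ⟨⟨b, ↑u⁻¹ * a, one_sided this, this⟩, rfl⟩

lemma nonunit_add {a b : R} (ha : ¬ IsUnit a) (hb : ¬ IsUnit b) : ¬ IsUnit (a + b) := by
  intro h
  rcases h with ⟨u, hu⟩
  have h2 : (↑u⁻¹ * a) + (↑u⁻¹ * b) = 1 := by rw [← mul_add, ← hu, Units.inv_mul]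
  rcases IsLocalRing.isUnit_or_isUnit_of_add_one h2 with h | h
  · exact ha (unit_of_mul_right h)
  · exact hb (unit_of_mul_right h)

lemma unit_one_sub {a : R} (ha : ¬ IsUnit a) : IsUnit (1 - a) :=
  (loc_or a).resolve_left ha

lemma unit_sub_one {a : R} (ha : ¬ IsUnit a) : IsUnit (a - 1) := by
  have := (unit_one_sub ha).neg
  rwa [neg_sub] at this

lemma unit_one_add {a : R} (ha : ¬ IsUnit a) : IsUnit (1 + a) := by
  have h : ¬ IsUnit (-a) := fun h => ha (by simpa using h.neg)
  have := unit_one_sub h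
  rwa [sub_neg_eq_add] at this

lemma unit_sub_nonunit {u a : R} (hu : IsUnit u) (ha : ¬ IsUnit a) : IsUnit (u - a) := by
  by_contra h
  have := nonunit_add h ha
  rw [sub_add_cancel] at this
  exact this hu

end LocalFacts

open Matrix

lemma isUnit_of_inv {A B : M2} (h1 : A * B = 1) (h2 : B * A = 1) : IsUnit A :=
  ⟨⟨A, B, h1, h2⟩, rfl⟩

lemma obtain_inv {A : M2} (h : IsUnit A) : ∃ B, A * B = 1 ∧ B * A = 1 := by
  rcases h with ⟨u, rfl⟩
  exact ⟨_, u.mul_inv, u.inv_mul⟩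

lemma entry_eq {A B : M2} (h : A = B) (i j : Fin 2) : A i j = B i j := by rw [h]

lemma mUnit_lower {α δ : R} (hα : IsUnit α) (hδ : IsUnit δ) (γ : R) : IsUnit !![α, 0; γ, δ] := by
  rcases hα with ⟨a, rfl⟩
  rcases hδ with ⟨d, rfl⟩
  apply isUnit_of_inv (B := !![(↑a⁻¹ : R), 0; -(↑d⁻¹ * γ * ↑a⁻¹), ↑d⁻¹]) <;>
  · ext i j
    fin_cases i <;> fin_cases j <;>
      simp [Matrix.mul_apply, Fin.sum_univ_two, mul_assoc, Units.mul_inv_cancel_left,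
        Units.inv_mul_cancel_left, ← mul_assoc]

lemma mUnit_upper {α δ : R} (hα : IsUnit α) (hδ : IsUnit δ) (β : R) : IsUnit !![α, β; 0, δ] := by
  rcases hα with ⟨a, rfl⟩
  rcases hδ with ⟨d, rfl⟩
  apply isUnit_of_inv (B := !![(↑a⁻¹ : R), -(↑a⁻¹ * β * ↑d⁻¹); 0, ↑d⁻¹]) <;>
  · ext i j
    fin_cases i <;> fin_cases j <;>
      simp [Matrix.mul_apply, Fin.sum_univ_two, mul_assoc, Units.mul_inv_cancel_left,
        Units.inv_mul_cancel_left, ← mul_assoc]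

lemma mUnit_anti {β γ : R} (hβ : IsUnit β) (hγ : IsUnit γ) (δ : R) : IsUnit !![0, β; γ, δ] := by
  rcases hβ with ⟨b, rfl⟩
  rcases hγ with ⟨c, rfl⟩
  apply isUnit_of_inv (B := !![-(↑c⁻¹ * δ * ↑b⁻¹), (↑c⁻¹ : R); ↑b⁻¹, 0]) <;>
  · ext i j
    fin_cases i <;> fin_cases j <;>
      simp [Matrix.mul_apply, Fin.sum_univ_two, mul_assoc, Units.mul_inv_cancel_left,
        Units.inv_mul_cancel_left, ← mul_assoc]

lemma mUnit_schur {α β γ δ αi : R} (h1 : α * αi = 1) (h2 : αi * α = 1)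
    (hw : IsUnit (δ - γ * αi * β)) : IsUnit !![α, β; γ, δ] := by
  have hfac : !![α, β; γ, δ] = !![1, 0; γ * αi, 1] * !![α, β; 0, δ - γ * αi * β] := by
    ext i j
    fin_cases i <;> fin_cases j <;>
      simp [Matrix.mul_apply, Fin.sum_univ_two, mul_assoc, h2]
  rw [hfac]
  exact (mUnit_lower isUnit_one isUnit_one _).mul
    (mUnit_upper ⟨⟨α, αi, h1, h2⟩, rfl⟩ hw β)

lemma diag_unit_entries {α β : R} (h : IsUnit !![α, 0; 0, β]) : IsUnit α ∧ IsUnit β := by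
  obtain ⟨N, hN1, hN2⟩ := obtain_inv h
  have e1 := entry_eq hN1 0 0
  have e2 := entry_eq hN2 0 0
  have e3 := entry_eq hN1 1 1
  have e4 := entry_eq hN2 1 1
  simp [Matrix.mul_apply, Fin.sum_univ_two, Matrix.one_apply] at e1 e2 e3 e4
  exact ⟨⟨⟨α, N 0 0, e1, e2⟩, rfl⟩, ⟨⟨β, N 1 1, e3, e4⟩, rfl⟩⟩

lemma mUnit_diag {α β : R} (hα : IsUnit α) (hβ : IsUnit β) : IsUnit !![α, 0; 0, β] :=
  mUnit_lower hα hβ 0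

lemma conj_unit_iff {A P Pi : M2} (h1 : P * Pi = 1) (h2 : Pi * P = 1) :
    IsUnit (Pi * A * P) ↔ IsUnit A := by
  constructor
  · intro h
    have : A = P * (Pi * A * P) * Pi := by
      simp only [← mul_assoc]
      rw [h1, one_mul, mul_assoc, h1, mul_one]
    rw [this]
    exact ((isUnit_of_inv h1 h2).mul h).mul (isUnit_of_inv h2 h1)
  · intro h
    exact ((isUnit_of_inv h2 h1).mul h).mul (isUnit_of_inv h1 h2)

lemma conj_sub_one {A P Pi : M2} (h2 : Pi * P = 1) :
    Pi * A * P - 1 = Pi * (A - 1) * P := by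
  rw [mul_sub, sub_mul, mul_one, h2]

lemma sc_conj {A P Pi : M2} (h1 : P * Pi = 1) (h2 : Pi * P = 1)
    (h : IsStronglyClean (Pi * A * P)) : IsStronglyClean A := by
  obtain ⟨e, u, he, hu, hsum, hcomm⟩ := h
  refine ⟨P * e * Pi, P * u * Pi, ?_, ?_, ?_, ?_⟩
  · show P * e * Pi * (P * e * Pi) = P * e * Pi
    calc P * e * Pi * (P * e * Pi) = P * (e * (Pi * P) * e) * Pi := by
          simp only [mul_assoc]
    _ = P * e * Pi := by rw [h2, mul_one, he.eq]
  · exact ((isUnit_of_inv h1 h2).mul hu).mul (isUnit_of_inv h2 h1)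
  · have : P * (Pi * A * P) * Pi = A := by
      rw [← mul_assoc, ← mul_assoc, h1, one_mul, mul_assoc, h1, mul_one]
    rw [← this, hsum, mul_add, add_mul]
  · calc P * e * Pi * (P * u * Pi) = P * (e * (Pi * P) * u) * Pi := by simp only [mul_assoc]
    _ = P * (u * (Pi * P) * e) * Pi := by rw [h2, mul_one, mul_one, hcomm]
    _ = P * u * Pi * (P * e * Pi) := by simp only [mul_assoc]

section Poly

lemma quad_decomp {f : R[X]} (hm : f.Monic) (hd : f.natDegree = 2) :
    f = X ^ 2 + C (f.coeff 1) * X + C (f.coeff 0) := by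
  have h2 : f.coeff 2 = 1 := by
    have := hm.coeff_natDegree
    rwa [hd] at this
  ext n
  simp only [coeff_add, coeff_X_pow, coeff_C_mul, coeff_X, coeff_C]
  rcases n with _ | _ | _ | n
  · norm_num
  · norm_num
  · norm_num [h2]
  · have hz : f.coeff (n + 3) = 0 := coeff_eq_zero_of_natDegree_lt (by omega)
    rw [hz, if_neg (by omega), if_neg (by omega), if_neg (by omega)]
    norm_num

lemma lin_mul (c d : R) :
    (X + C c) * (X + C d) = X ^ 2 + C (c + d) * X + C (c * d) := by
  rw [mul_add, add_mul, add_mul, X_mul_C, ← C_mul, C_add, add_mul, ← sq]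
  noncomm_ring

lemma quad_eval0 (a b : R) : (X ^ 2 + C a * X + C b).eval 0 = b := by
  simp [X_pow_eq_monomial, eval_monomial]

lemma quad_eval1 (a b : R) : (X ^ 2 + C a * X + C b).eval 1 = 1 + a + b := by
  simp [X_pow_eq_monomial, eval_monomial]

lemma lin_eval0 (c : R) : (X + C c).eval 0 = c := by simp

lemma lin_eval1 (c : R) : (X + C c).eval 1 = 1 + c := by simp

lemma quad_monic [Nontrivial R] (a b : R) : (X ^ 2 + C a * X + C b).Monic := by
  rw [add_assoc]
  apply monic_X_pow_add
  apply lt_of_le_of_lt (degree_linear_le)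
  norm_num

lemma quad_natDegree [Nontrivial R] (a b : R) : (X ^ 2 + C a * X + C b).natDegree = 2 := by
  have hdeg : (C a * X + C b).degree < (X ^ 2 : R[X]).degree := by
    apply lt_of_le_of_lt (degree_linear_le)
    rw [degree_X_pow]
    norm_num
  have hdeg2 : (X ^ 2 + (C a * X + C b) : R[X]).degree = 2 := by
    rw [degree_add_eq_left_of_degree_lt hdeg, degree_X_pow]
    norm_cast
  rw [add_assoc]
  exact natDegree_eq_of_degree_eq_some hdeg2

lemma quad_coeffs {a b a' b' : R} (h : (X ^ 2 + C a * X + C b : R[X]) = X ^ 2 + C a' * X + C b') :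
    a = a' ∧ b = b' := by
  constructor
  · have := congrArg (fun p => Polynomial.coeff p 1) h
    simpa using this
  · have := congrArg (fun p => Polynomial.coeff p 0) h
    simpa using this

lemma root_factor {a b s : R} (h : (s + a) * s = -b) :
    (X ^ 2 + C a * X + C b : R[X]) = (X + C (a + s)) * (X + C (-s)) := by
  rw [lin_mul]
  have h1 : a + s + -s = a := by abel
  have h2 : (a + s) * -s = b := by
    have h3 : (a + s) * -s = -((s + a) * s) := by noncomm_ring
    rw [h3, h, neg_neg]
  rw [h1, h2]

end Poly

section LocalMatrix
variable [IsLocalRing R]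

lemma comp_unit_iff {x y : R} : IsUnit (!![0, x; 1, y] : M2) ↔ IsUnit x := by
  constructor
  · intro h
    obtain ⟨N, hN1, hN2⟩ := obtain_inv h
    have e1 := entry_eq hN1 0 0
    simp [Matrix.mul_apply, Fin.sum_univ_two, Matrix.one_apply] at e1
    exact ⟨⟨x, N 1 0, e1, one_sided e1⟩, rfl⟩
  · intro hx
    rcases hx with ⟨u, rfl⟩
    apply isUnit_of_inv (B := !![-(y * ↑u⁻¹), 1; (↑u⁻¹ : R), 0]) <;>
    · ext i j
      fin_cases i <;> fin_cases j <;>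
        simp [Matrix.mul_apply, Fin.sum_univ_two, Matrix.one_apply, mul_assoc,
          Units.mul_inv_cancel_left, Units.inv_mul_cancel_left, ← mul_assoc]

lemma comp_sub_one {x y : R} : (!![0, x; 1, y] : M2) - 1 = !![-1, x; 1, y - 1] := by
  ext i j
  fin_cases i <;> fin_cases j <;> simp [Matrix.one_apply]

lemma comp1_unit_iff {x y : R} : IsUnit ((!![0, x; 1, y] : M2) - 1) ↔ IsUnit (x + y - 1) := by
  rw [comp_sub_one]
  constructor
  · intro h
    obtain ⟨N, hN1, hN2⟩ := obtain_inv h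
    have e1 := entry_eq hN1 0 0
    have e2 := entry_eq hN1 1 0
    simp [Matrix.mul_apply, Fin.sum_univ_two, Matrix.one_apply] at e1 e2
    have : (x + y - 1) * N 1 0 = 1 := by
      have h3 := congrArg₂ (· + ·) e1 e2
      simp only [add_zero] at h3
      have h4 : (x + y - 1) * N 1 0 = -N 0 0 + x * N 1 0 + (N 0 0 + (y - 1) * N 1 0) := by
        noncomm_ring
      rw [h4, h3]
    exact ⟨⟨_, _, this, one_sided this⟩, rfl⟩
  · intro hw
    have hfac : (!![-1, x; 1, y - 1] : M2) = !![1, 0; -1, 1] * !![-1, x; 0, x + y - 1] := by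
      ext i j
      fin_cases i <;> fin_cases j <;>
        simp [Matrix.mul_apply, Fin.sum_univ_two]
      noncomm_ring
    rw [hfac]
    exact (mUnit_lower isUnit_one isUnit_one _).mul (mUnit_upper isUnit_one.neg hw x)

lemma col_unit_entry {Q : M2} (h : IsUnit Q) (j : Fin 2) :
    IsUnit (Q 0 j) ∨ IsUnit (Q 1 j) := by
  by_contra hc
  push_neg at hc
  obtain ⟨N, hN1, hN2⟩ := obtain_inv h
  have e1 := entry_eq hN2 j j
  simp [Matrix.mul_apply, Fin.sum_univ_two, Matrix.one_apply] at e1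
  have h0 : ¬ IsUnit (N j 0 * Q 0 j) := fun hh => hc.1 (unit_of_mul_right hh)
  have h1 : ¬ IsUnit (N j 1 * Q 1 j) := fun hh => hc.2 (unit_of_mul_right hh)
  exact (nonunit_add h0 h1) (e1 ▸ isUnit_one)



lemma indep_cols {e00 e01 e10 e11 v0 v1 w0 w1 : R}
    (hv0 : e00 * v0 + e01 * v1 = v0) (hv1 : e10 * v0 + e11 * v1 = v1)
    (hw0 : e00 * w0 + e01 * w1 = 0) (hw1 : e10 * w0 + e11 * w1 = 0)
    (hv : IsUnit v0 ∨ IsUnit v1) (hw : IsUnit w0 ∨ IsUnit w1) :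
    IsUnit (!![v0, w0; v1, w1] : M2) := by
  have hsub : ∀ z : R, ¬ IsUnit z → ∀ t : R, ¬ IsUnit (t * z) :=
    fun z hz t h => hz (unit_of_mul_right h)
  rcases hv with hvu | hvu
  · rcases hvu with ⟨u, hu⟩
    by_cases hδ : IsUnit (w1 - v1 * (↑u⁻¹ * w0))
    · have hfac : (!![v0, w0; v1, w1] : M2) =
          !![1, 0; v1 * ↑u⁻¹, 1] * !![v0, w0; 0, w1 - v1 * (↑u⁻¹ * w0)] := by
        ext i j
        fin_cases i <;> fin_cases j <;>
          simp [Matrix.mul_apply, Fin.sum_univ_two, ← hu, mul_assoc,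
            Units.inv_mul_cancel_left]
      rw [hfac]
      exact (mUnit_lower isUnit_one isUnit_one _).mul (mUnit_upper ⟨u, hu⟩ hδ _)
    · exfalso
      have key : e01 * (w1 - v1 * (↑u⁻¹ * w0)) = -w0 := by
        have h1 : e01 * (w1 - v1 * (↑u⁻¹ * w0)) =
            (e00 * w0 + e01 * w1) - (e00 * v0 + e01 * v1) * (↑u⁻¹ * w0)
              + (e00 * (v0 * (↑u⁻¹ * w0)) - e00 * w0) := by noncomm_ring
        rw [hw0, hv0, ← hu, Units.mul_inv_cancel_left] at h1
        rw [h1]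
        noncomm_ring
      have hw0n : ¬ IsUnit w0 := by
        intro h
        exact hδ (unit_of_mul_right (key ▸ h.neg))
      have hw1n : ¬ IsUnit w1 := by
        have : w1 = (w1 - v1 * (↑u⁻¹ * w0)) + v1 * (↑u⁻¹ * w0) := by noncomm_ring
        rw [this]
        exact nonunit_add hδ (hsub _ (fun h => hw0n (unit_of_mul_right h)) _)
      rcases hw with h | h
      · exact hw0n h
      · exact hw1n h
  · rcases hvu with ⟨u, hu⟩
    by_cases hδ : IsUnit (w0 - v0 * (↑u⁻¹ * w1))
    · have hfac : (!![v0, w0; v1, w1] : M2) =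
          !![1, v0 * ↑u⁻¹; 0, 1] * !![0, w0 - v0 * (↑u⁻¹ * w1); v1, w1] := by
        ext i j
        fin_cases i <;> fin_cases j <;>
          simp [Matrix.mul_apply, Fin.sum_univ_two, ← hu, mul_assoc,
            Units.inv_mul_cancel_left]
      rw [hfac]
      exact (mUnit_upper isUnit_one isUnit_one _).mul (mUnit_anti hδ ⟨u, hu⟩ _)
    · exfalso
      have key : e10 * (w0 - v0 * (↑u⁻¹ * w1)) = -w1 := by
        have h1 : e10 * (w0 - v0 * (↑u⁻¹ * w1)) =
            (e10 * w0 + e11 * w1) - (e10 * v0 + e11 * v1) * (↑u⁻¹ * w1)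
              + (e11 * (v1 * (↑u⁻¹ * w1)) - e11 * w1) := by noncomm_ring
        rw [hw1, hv1, ← hu, Units.mul_inv_cancel_left] at h1
        rw [h1]
        noncomm_ring
      have hw1n : ¬ IsUnit w1 := by
        intro h
        exact hδ (unit_of_mul_right (key ▸ h.neg))
      have hw0n : ¬ IsUnit w0 := by
        have : w0 = (w0 - v0 * (↑u⁻¹ * w1)) + v0 * (↑u⁻¹ * w1) := by noncomm_ring
        rw [this]
        exact nonunit_add hδ (hsub _ (fun h => hw1n (unit_of_mul_right h)) _)
      rcases hw with h | h
      · exact hw0n h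
      · exact hw1n h


lemma idem_zero_of_nonunit {E : M2} (hE : E * E = E)
    (h00 : ¬ IsUnit (E 0 0)) (h01 : ¬ IsUnit (E 0 1))
    (h10 : ¬ IsUnit (E 1 0)) (h11 : ¬ IsUnit (E 1 1)) : E = 0 := by
  obtain ⟨u, hu⟩ := unit_one_sub h00
  have hone : (1 - E : M2) = !![1 - E 0 0, -(E 0 1); -(E 1 0), 1 - E 1 1] := by
    ext i j
    fin_cases i <;> fin_cases j <;> simp [Matrix.one_apply]
  have hschur : IsUnit ((1 - E 1 1) - -(E 1 0) * ↑u⁻¹ * -(E 0 1)) := by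
    have hr : (1 - E 1 1) - -(E 1 0) * ↑u⁻¹ * -(E 0 1)
        = 1 - (E 1 1 + E 1 0 * ↑u⁻¹ * E 0 1) := by noncomm_ring
    rw [hr]
    refine unit_one_sub (nonunit_add h11 ?_)
    intro h
    exact h01 (unit_of_mul_right h)
  have h1E : IsUnit (1 - E : M2) := by
    rw [hone]
    exact mUnit_schur (by rw [← hu]; exact u.mul_inv) (by rw [← hu]; exact u.inv_mul) hschur
  obtain ⟨V, hV1, hV2⟩ := obtain_inv h1E
  have hEF : E * (1 - E) = 0 := by rw [mul_sub, mul_one, hE, sub_self]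
  calc E = E * ((1 - E) * V) := by rw [hV1, mul_one]
  _ = E * (1 - E) * V := by rw [mul_assoc]
  _ = 0 := by rw [hEF, zero_mul]

lemma conj_mul_conj {X Y Q Qi : M2} (h1 : Q * Qi = 1) :
    (Qi * X * Q) * (Qi * Y * Q) = Qi * (X * Y) * Q := by
  calc (Qi * X * Q) * (Qi * Y * Q) = Qi * X * (Q * Qi) * (Y * Q) := by simp only [mul_assoc]
  _ = Qi * (X * Y) * Q := by rw [h1, mul_one]; simp only [mul_assoc]

lemma diag_decomp {B E U : M2} (hE : E * E = E) (hU : IsUnit U) (hsum : B = E + U)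
    (hcomm : E * U = U * E) (hB : ¬ IsUnit B) (hB1 : ¬ IsUnit (B - 1)) :
    ∃ (Q : M2) (α β : R), IsUnit Q ∧ B * Q = Q * !![α, 0; 0, β] ∧ ¬ IsUnit α ∧ IsUnit β := by
  by_cases hE0 : E = 0
  · exact absurd (by rw [hsum, hE0, zero_add]; exact hU) hB
  by_cases hE1 : E = 1
  · refine absurd ?_ hB1
    rw [hsum, hE1, add_sub_cancel_left]
    exact hU
  have hF : (1 - E) * (1 - E) = 1 - E := by
    have h1 : (1 - E) * (1 - E) = 1 - E - E + E * E := by noncomm_ring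
    rw [h1, hE]
    noncomm_ring
  have hEent : IsUnit (E 0 0) ∨ IsUnit (E 1 0) ∨ IsUnit (E 0 1) ∨ IsUnit (E 1 1) := by
    by_contra hc
    push_neg at hc
    exact hE0 (idem_zero_of_nonunit hE hc.1 hc.2.2.1 hc.2.1 hc.2.2.2)
  have hFent : IsUnit ((1 - E) 0 0) ∨ IsUnit ((1 - E) 1 0) ∨
      IsUnit ((1 - E) 0 1) ∨ IsUnit ((1 - E) 1 1) := by
    by_contra hc
    push_neg at hc
    have : (1 - E : M2) = 0 := idem_zero_of_nonunit hF hc.1 hc.2.2.1 hc.2.1 hc.2.2.2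
    exact hE1 (sub_eq_zero.mp this).symm
  obtain ⟨j, hv⟩ : ∃ j : Fin 2, IsUnit (E 0 j) ∨ IsUnit (E 1 j) := by
    rcases hEent with h | h | h | h
    exacts [⟨0, Or.inl h⟩, ⟨0, Or.inr h⟩, ⟨1, Or.inl h⟩, ⟨1, Or.inr h⟩]
  obtain ⟨k, hw⟩ : ∃ k : Fin 2, IsUnit ((1 - E) 0 k) ∨ IsUnit ((1 - E) 1 k) := by
    rcases hFent with h | h | h | h
    exacts [⟨0, Or.inl h⟩, ⟨0, Or.inr h⟩, ⟨1, Or.inl h⟩, ⟨1, Or.inr h⟩]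
  set v0 := E 0 j with hv0def
  set v1 := E 1 j with hv1def
  set w0 := (1 - E) 0 k with hw0def
  set w1 := (1 - E) 1 k with hw1def
  have hv0 : E 0 0 * E 0 j + E 0 1 * E 1 j = E 0 j := by
    have := entry_eq hE 0 j
    simpa [Matrix.mul_apply, Fin.sum_univ_two] using this
  have hv1 : E 1 0 * E 0 j + E 1 1 * E 1 j = E 1 j := by
    have := entry_eq hE 1 j
    simpa [Matrix.mul_apply, Fin.sum_univ_two] using this
  have hEF : E * (1 - E) = 0 := by rw [mul_sub, mul_one, hE, sub_self]
  have hw0 : E 0 0 * (1 - E) 0 k + E 0 1 * (1 - E) 1 k = 0 := by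
    have := entry_eq hEF 0 k
    simpa [Matrix.mul_apply, Fin.sum_univ_two] using this
  have hw1 : E 1 0 * (1 - E) 0 k + E 1 1 * (1 - E) 1 k = 0 := by
    have := entry_eq hEF 1 k
    simpa [Matrix.mul_apply, Fin.sum_univ_two] using this
  set Q : M2 := !![v0, w0; v1, w1] with hQdef
  have hQ : IsUnit Q := indep_cols hv0 hv1 hw0 hw1 hv hw
  obtain ⟨Qi, hQ1, hQ2⟩ := obtain_inv hQ
  have hEQ : E * Q = Q * !![(1 : R), 0; 0, 0] := by
    ext i l
    fin_cases i <;> fin_cases l <;>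
      simp [hQdef, Matrix.mul_apply, Fin.sum_univ_two, (show E 0 0 * v0 + E 0 1 * v1 = v0 from hv0),
        (show E 1 0 * v0 + E 1 1 * v1 = v1 from hv1), (show E 0 0 * w0 + E 0 1 * w1 = 0 from hw0),
        (show E 1 0 * w0 + E 1 1 * w1 = 0 from hw1)]
  have hEQ' : Qi * E * Q = !![(1 : R), 0; 0, 0] := by
    rw [mul_assoc, hEQ, ← mul_assoc, hQ2, one_mul]
  have hU'unit : IsUnit (Qi * U * Q) := (conj_unit_iff hQ1 hQ2).mpr hU
  set U' : M2 := Qi * U * Q with hU'def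
  have hDU : !![(1 : R), 0; 0, 0] * U' = U' * !![(1 : R), 0; 0, 0] := by
    rw [← hEQ', hU'def, conj_mul_conj hQ1, conj_mul_conj hQ1, hcomm]
  have h01 : U' 0 1 = 0 := by
    have := entry_eq hDU 0 1
    simpa [Matrix.mul_apply, Fin.sum_univ_two] using this
  have h10 : U' 1 0 = 0 := by
    have := entry_eq hDU 1 0
    simpa [Matrix.mul_apply, Fin.sum_univ_two] using this.symm
  obtain ⟨V, hV1, hV2⟩ := obtain_inv hU'unit
  have hu00 : IsUnit (U' 0 0) := by
    have e1 := entry_eq hV1 0 0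
    have e2 := entry_eq hV2 0 0
    simp [Matrix.mul_apply, Fin.sum_univ_two, Matrix.one_apply, h01, h10] at e1 e2
    exact ⟨⟨_, _, e1, e2⟩, rfl⟩
  have hu11 : IsUnit (U' 1 1) := by
    have e1 := entry_eq hV1 1 1
    have e2 := entry_eq hV2 1 1
    simp [Matrix.mul_apply, Fin.sum_univ_two, Matrix.one_apply, h01, h10] at e1 e2
    exact ⟨⟨_, _, e1, e2⟩, rfl⟩
  have hBQ : Qi * B * Q = !![1 + U' 0 0, 0; 0, U' 1 1] := by
    have hexp : Qi * B * Q = Qi * E * Q + U' := by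
      rw [hsum, hU'def]
      simp only [mul_add, add_mul]
    rw [hexp, hEQ', Matrix.eta_fin_two U', h01, h10]
    ext i l
    fin_cases i <;> fin_cases l <;> simp
  refine ⟨Q, 1 + U' 0 0, U' 1 1, hQ, ?_, ?_, hu11⟩
  · have hBQ2 : B * Q = Q * (Qi * B * Q) := by
      simp only [← mul_assoc]
      rw [hQ1, one_mul]
    rw [hBQ2, hBQ]
  · intro hα
    have hdB : ¬ IsUnit (Qi * B * Q) := fun h => hB ((conj_unit_iff hQ1 hQ2).mp h)
    rw [hBQ] at hdB
    exact hdB (mUnit_diag hα hu11)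


lemma eig_root {x y c0 c1 α : R} (h0 : x * c1 = c0 * α) (h1 : c0 + y * c1 = c1 * α)
    (hc : IsUnit c0 ∨ IsUnit c1) : ∃ s : R, (s - y) * s = x ∧ (IsUnit s ↔ IsUnit α) := by
  have hc1 : IsUnit c1 := by
    rcases hc with hc0 | hc1
    · by_contra hn
      have hc0' : c0 = c1 * α + -(y * c1) := by
        rw [← sub_eq_iff_eq_add'.mpr h1.symm]
        noncomm_ring
      have n1 : ¬ IsUnit (c1 * α) := fun h => hn (unit_of_mul_left h)
      have n2 : ¬ IsUnit (-(y * c1)) := fun h => hn (unit_of_mul_right (by simpa using h.neg))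
      exact (hc0' ▸ nonunit_add n1 n2) hc0
    · exact hc1
  rcases hc1 with ⟨u, hu⟩
  have hsc : (c1 * α * ↑u⁻¹) * c1 = c1 * α := by
    rw [mul_assoc, ← hu, Units.inv_mul, mul_one]
  refine ⟨c1 * α * ↑u⁻¹, ?_, ?_⟩
  · have hc0eq : c0 = (c1 * α * ↑u⁻¹ - y) * c1 := by
      rw [sub_mul, hsc, ← h1]
      noncomm_ring
    have h4 : x * c1 = ((c1 * α * ↑u⁻¹ - y) * (c1 * α * ↑u⁻¹)) * c1 := by
      rw [h0, hc0eq]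
      calc ((c1 * α * ↑u⁻¹ - y) * c1) * α = (c1 * α * ↑u⁻¹ - y) * (c1 * α) := by
            rw [mul_assoc]
      _ = (c1 * α * ↑u⁻¹ - y) * ((c1 * α * ↑u⁻¹) * c1) := by rw [hsc]
      _ = ((c1 * α * ↑u⁻¹ - y) * (c1 * α * ↑u⁻¹)) * c1 := by rw [← mul_assoc]
    have hcu : c1 * (↑u⁻¹ : R) = 1 := by rw [← hu, Units.mul_inv]
    have h5 := congrArg (· * (↑u⁻¹ : R)) h4
    rw [mul_assoc, hcu, mul_one, mul_assoc, hcu, mul_one] at h5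
    exact h5.symm
  · constructor
    · intro hs
      have hiu : (↑u⁻¹ : R) * c1 = 1 := by rw [← hu, Units.inv_mul]
      have hα : α = ↑u⁻¹ * ((c1 * α * ↑u⁻¹) * c1) := by
        rw [hsc, ← mul_assoc, hiu, one_mul]
      rw [hα]
      exact (Units.isUnit u⁻¹).mul (hs.mul (hu ▸ u.isUnit))
    · intro hα
      exact IsUnit.mul (IsUnit.mul (hu ▸ u.isUnit) hα) (Units.isUnit u⁻¹)

lemma comp_roots {x y : R} (hsc : IsStronglyClean (!![0, x; 1, y] : M2))
    (hB : ¬ IsUnit (!![0, x; 1, y] : M2)) (hB1 : ¬ IsUnit ((!![0, x; 1, y] : M2) - 1)) :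
    ∃ s p : R, (s - y) * s = x ∧ (p - y) * p = x ∧ ¬ IsUnit s ∧ IsUnit p := by
  obtain ⟨E, U, hE, hU, hsum, hcomm⟩ := hsc
  obtain ⟨Q, α, β, hQ, hBQ, hα, hβ⟩ := diag_decomp hE.eq hU hsum hcomm hB hB1
  have e00 := entry_eq hBQ 0 0
  have e10 := entry_eq hBQ 1 0
  have e01 := entry_eq hBQ 0 1
  have e11 := entry_eq hBQ 1 1
  simp [Matrix.mul_apply, Fin.sum_univ_two] at e00 e10 e01 e11
  obtain ⟨s, hs1, hs2⟩ := eig_root e00 e10 (col_unit_entry hQ 0)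
  obtain ⟨p, hp1, hp2⟩ := eig_root e01 e11 (col_unit_entry hQ 1)
  exact ⟨s, p, hs1, hp1, fun h => hα (hs2.mp h), hp2.mpr hβ⟩


lemma cyclic_form {A : M2} (hA : ¬ IsUnit A) (hA1 : ¬ IsUnit (A - 1)) :
    ∃ P : M2, IsUnit P ∧ ∃ x y : R, A * P = P * !![0, x; 1, y] := by
  set a := A 0 0 with ha
  set b := A 0 1 with hb
  set c := A 1 0 with hc
  set d := A 1 1 with hd
  have hEta : A = !![a, b; c, d] := Matrix.eta_fin_two A
  by_cases hub : IsUnit b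
  · rcases hub with ⟨u, hu⟩
    set y := (↑u⁻¹ : R) * (a * b + b * d) with hydef
    have hby : b * y = a * b + b * d := by rw [hydef, ← hu, Units.mul_inv_cancel_left]
    set x := c * b + d * d - d * y with hxdef
    refine ⟨!![0, b; 1, d], mUnit_anti (⟨u, hu⟩ : ∃ v : Rˣ, ↑v = b) isUnit_one d, x, y, ?_⟩
    rw [hEta]
    ext i j
    fin_cases i <;> fin_cases j <;>
      simp [Matrix.mul_apply, Fin.sum_univ_two, hby, hxdef, sub_add_cancel]
  by_cases huc : IsUnit c
  · rcases huc with ⟨u, hu⟩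
    set y := (↑u⁻¹ : R) * (c * a + d * c) with hydef
    have hcy : c * y = c * a + d * c := by rw [hydef, ← hu, Units.mul_inv_cancel_left]
    set x := a * a + b * c - a * y with hxdef
    refine ⟨!![1, a; 0, c], mUnit_upper isUnit_one (⟨u, hu⟩ : ∃ v : Rˣ, ↑v = c) a, x, y, ?_⟩
    rw [hEta]
    ext i j
    fin_cases i <;> fin_cases j <;>
      simp [Matrix.mul_apply, Fin.sum_univ_two, hcy, hxdef, sub_add_cancel]
  -- both b and c are nonunits
  have hsub1 : (A - 1 : M2) = !![a - 1, b; c, d - 1] := by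
    rw [hEta]
    ext i j
    fin_cases i <;> fin_cases j <;> simp [Matrix.one_apply]
  have h1 : ¬ IsUnit a ∨ ¬ IsUnit d := by
    by_contra hcon
    push_neg at hcon
    rcases hcon.1 with ⟨u, hu⟩
    refine hA ?_
    rw [hEta]
    refine mUnit_schur (by rw [← hu]; exact u.mul_inv) (by rw [← hu]; exact u.inv_mul) ?_
    exact unit_sub_nonunit hcon.2 (fun h => hub (unit_of_mul_right h))
  have h2 : ¬ IsUnit (a - 1) ∨ ¬ IsUnit (d - 1) := by
    by_contra hcon
    push_neg at hcon
    rcases hcon.1 with ⟨u, hu⟩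
    refine hA1 ?_
    rw [hsub1]
    refine mUnit_schur (by rw [← hu]; exact u.mul_inv) (by rw [← hu]; exact u.inv_mul) ?_
    exact unit_sub_nonunit hcon.2 (fun h => hub (unit_of_mul_right h))
  have hda : IsUnit (d - a) := by
    rcases h1 with h1 | h1
    · rcases h2 with h2 | h2
      · exact absurd (unit_sub_one h1) h2
      · have hdu : IsUnit d := by
          have := unit_one_add h2
          rwa [show (1 : R) + (d - 1) = d by noncomm_ring] at this
        exact unit_sub_nonunit hdu h1
    · rcases h2 with h2 | h2
      · have hau : IsUnit a := by
          have := unit_one_add h2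
          rwa [show (1 : R) + (a - 1) = a by noncomm_ring] at this
        have := (unit_sub_nonunit hau h1).neg
        rwa [neg_sub] at this
      · exact absurd (unit_sub_one h1) h2
  have hδ : IsUnit (c + d - (a + b)) := by
    have hbc : ¬ IsUnit (b - c) := by
      have hnegc : ¬ IsUnit (-c) := fun h => huc (by simpa using h.neg)
      have := nonunit_add hub hnegc
      rwa [← sub_eq_add_neg] at this
    have := unit_sub_nonunit hda hbc
    rwa [show d - a - (b - c) = c + d - (a + b) by noncomm_ring] at this
  rcases hδ with ⟨w, hw⟩
  have hP : IsUnit (!![1, a + b; 1, c + d] : M2) := by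
    have hfac : (!![1, a + b; 1, c + d] : M2) =
        !![1, 0; 1, c + d - (a + b)] * !![1, a + b; 0, 1] := by
      ext i j
      fin_cases i <;> fin_cases j <;> simp [Matrix.mul_apply, Fin.sum_univ_two]
    rw [hfac]
    exact (mUnit_lower isUnit_one ⟨w, hw⟩ 1).mul (mUnit_upper isUnit_one isUnit_one _)
  set r0 := a * (a + b) + b * (c + d) with hr0
  set r1 := c * (a + b) + d * (c + d) with hr1
  set y := (↑w⁻¹ : R) * (r1 - r0) with hy
  have hδy : (c + d - (a + b)) * y = r1 - r0 := by
    rw [hy, ← hw, Units.mul_inv_cancel_left]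
  refine ⟨!![1, a + b; 1, c + d], hP, r0 - (a + b) * y, y, ?_⟩
  rw [hEta]
  ext i j
  fin_cases i <;> fin_cases j <;> simp [Matrix.mul_apply, Fin.sum_univ_two]
  rfl
  rw [← hr1]
  have hstep : r0 - (a + b) * y + (c + d) * y = r0 + (c + d - (a + b)) * y := by
    noncomm_ring
  rw [hstep, hδy]
  noncomm_ring


lemma comp_sc {x y s p : R} (hs : (s - y) * s = x) (hp : (p - y) * p = x)
    (hsn : ¬ IsUnit s) (hpu : IsUnit p) : IsStronglyClean (!![0, x; 1, y] : M2) := by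
  have hdelta : IsUnit (s - p) := by
    have := (unit_sub_nonunit hpu hsn).neg
    rwa [neg_sub] at this
  have hT : IsUnit (!![s - y, p - y; 1, 1] : M2) := by
    have hfac : (!![s - y, p - y; 1, 1] : M2) = !![s - p, p - y; 0, 1] * !![1, 0; 1, 1] := by
      ext i j
      fin_cases i <;> fin_cases j <;> simp [Matrix.mul_apply, Fin.sum_univ_two]
    rw [hfac]
    exact (mUnit_upper hdelta isUnit_one _).mul (mUnit_lower isUnit_one isUnit_one 1)
  obtain ⟨Ti, hT1, hT2⟩ := obtain_inv hT
  have hBT : (!![0, x; 1, y] : M2) * !![s - y, p - y; 1, 1] =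
      !![s - y, p - y; 1, 1] * !![s, 0; 0, p] := by
    ext i j
    fin_cases i <;> fin_cases j <;>
      simp [Matrix.mul_apply, Fin.sum_univ_two, hs, hp, sub_add_cancel]
  have hBfull : (!![0, x; 1, y] : M2) = !![s - y, p - y; 1, 1] * !![s, 0; 0, p] * Ti := by
    rw [← hBT, mul_assoc, hT1, mul_one]
  have hdiag : (!![s, 0; 0, p] : M2) = !![1, 0; 0, 0] + !![s - 1, 0; 0, p] := by
    ext i j
    fin_cases i <;> fin_cases j <;> simp
  set T : M2 := !![s - y, p - y; 1, 1] with hTdef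
  refine ⟨T * !![1, 0; 0, 0] * Ti, T * !![s - 1, 0; 0, p] * Ti, ?_, ?_, ?_, ?_⟩
  · show _ * _ = _
    rw [conj_mul_conj hT2]
    congr 2
    ext i j
    fin_cases i <;> fin_cases j <;> simp [Matrix.mul_apply, Fin.sum_univ_two]
  · exact ((isUnit_of_inv hT1 hT2).mul (mUnit_diag (unit_sub_one hsn) hpu)).mul
      (isUnit_of_inv hT2 hT1)
  · rw [hBfull, hdiag]
    rw [mul_add, add_mul]
  · rw [conj_mul_conj hT2, conj_mul_conj hT2]
    congr 2
    ext i j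
    fin_cases i <;> fin_cases j <;> simp [Matrix.mul_apply, Fin.sum_univ_two]

end LocalMatrix
end Main

/-- For a local ring `R`, `M₂(R)` is strongly clean iff every monic quadratic polynomial
`f` over `R` admits factorizations `f = g₀g₁ = h₁h₀` into monic polynomials with
`g₀(0), g₁(1), h₀(0), h₁(1)` all units. -/
theorem matrix_two_stronglyClean_iff_factorization {R : Type*} [Ring R] [IsLocalRing R] :
    (∀ A : Matrix (Fin 2) (Fin 2) R, IsStronglyClean A) ↔
      (∀ f : R[X], f.Monic → f.natDegree = 2 →
        ∃ g₀ g₁ h₀ h₁ : R[X], g₀.Monic ∧ g₁.Monic ∧ h₀.Monic ∧ h₁.Monic ∧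
          f = g₀ * g₁ ∧ f = h₁ * h₀ ∧
          IsUnit (g₀.eval 0) ∧ IsUnit (g₁.eval 1) ∧
          IsUnit (h₀.eval 0) ∧ IsUnit (h₁.eval 1)) := by
  constructor
  · intro hSC f hm hd
    obtain ⟨a, b, hf⟩ : ∃ a b : R, f = X ^ 2 + C a * X + C b := ⟨_, _, quad_decomp hm hd⟩
    have he0 : f.eval 0 = b := by rw [hf]; exact quad_eval0 a b
    have he1 : f.eval 1 = 1 + a + b := by rw [hf]; exact quad_eval1 a b
    by_cases h1 : IsUnit (f.eval 1)
    · exact ⟨1, f, 1, f, monic_one, hm, monic_one, hm, (one_mul f).symm, (mul_one f).symm,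
        by simp, h1, by simp, h1⟩
    by_cases h0 : IsUnit (f.eval 0)
    · exact ⟨f, 1, f, 1, hm, monic_one, hm, monic_one, (mul_one f).symm, (one_mul f).symm,
        h0, by simp, h0, by simp⟩
    rw [he1] at h1
    rw [he0] at h0
    have hB : ¬ IsUnit (!![0, -b; 1, -a] : Matrix (Fin 2) (Fin 2) R) :=
      fun h => h0 (by simpa using (comp_unit_iff.mp h).neg)
    have hB1 : ¬ IsUnit ((!![0, -b; 1, -a] : Matrix (Fin 2) (Fin 2) R) - 1) := by
      intro h
      have h2 := (comp1_unit_iff.mp h).neg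
      rw [show -(-b + -a - 1) = 1 + a + b by abel] at h2
      exact h1 h2
    obtain ⟨s, p, hs1, hp1, hsn, hpu⟩ := comp_roots (hSC _) hB hB1
    have hs : (s + a) * s = -b := by rw [← sub_neg_eq_add]; exact hs1
    have hp : (p + a) * p = -b := by rw [← sub_neg_eq_add]; exact hp1
    have hxs : IsUnit (a + s) := by
      have hnx : ¬ IsUnit (1 + a + s) := by
        have heq : 1 + a + s = (1 + a + b) + (s + -b) := by abel
        rw [heq]
        exact nonunit_add h1 (nonunit_add hsn (fun h => h0 (by simpa using h.neg)))
      have := unit_sub_one hnx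
      rwa [show 1 + a + s - 1 = a + s by abel] at this
    have hg1u : IsUnit ((1 : R) + -s) := unit_one_add (fun h => hsn (by simpa using h.neg))
    have hapn : IsUnit (1 + (a + p)) := by
      rcases hpu with ⟨w, hw⟩
      have hpw : p * (↑w⁻¹ : R) = 1 := by rw [← hw, Units.mul_inv]
      have hpa : p + a = -b * ↑w⁻¹ := by
        have h4 := congrArg (· * (↑w⁻¹ : R)) hp
        rwa [mul_assoc, hpw, mul_one] at h4
      apply unit_one_add
      intro h
      rw [show a + p = p + a by abel, hpa] at h
      exact h0 (by simpa using (unit_of_mul_left h).neg)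
    refine ⟨X + C (a + s), X + C (-s), X + C (-p), X + C (a + p),
      monic_X_add_C _, monic_X_add_C _, monic_X_add_C _, monic_X_add_C _, ?_, ?_, ?_, ?_, ?_, ?_⟩
    · rw [hf]; exact root_factor hs
    · rw [hf]; exact root_factor hp
    · rw [lin_eval0]; exact hxs
    · rw [lin_eval1]; exact hg1u
    · rw [lin_eval0]
      exact IsUnit.neg hpu
    · rw [lin_eval1]; exact hapn
  · intro hFac A
    by_cases hA : IsUnit A
    · exact ⟨0, A, IsIdempotentElem.zero, hA, (zero_add A).symm, by simp⟩
    by_cases hA1 : IsUnit (A - 1)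
    · refine ⟨1, A - 1, IsIdempotentElem.one, hA1, by abel, by rw [one_mul, mul_one]⟩
    obtain ⟨P, hPu, x, y, hAP⟩ := cyclic_form hA hA1
    obtain ⟨Pi, hP1, hP2⟩ := obtain_inv hPu
    have hBeq : Pi * A * P = !![0, x; 1, y] := by
      rw [mul_assoc, hAP, ← mul_assoc, hP2, one_mul]
    apply sc_conj hP1 hP2
    rw [hBeq]
    have hBn : ¬ IsUnit (!![0, x; 1, y] : Matrix (Fin 2) (Fin 2) R) := by
      rw [← hBeq]
      exact fun h => hA ((conj_unit_iff hP1 hP2).mp h)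
    have hB1n : ¬ IsUnit ((!![0, x; 1, y] : Matrix (Fin 2) (Fin 2) R) - 1) := by
      rw [← hBeq, conj_sub_one hP2]
      exact fun h => hA1 ((conj_unit_iff hP1 hP2).mp h)
    have hxn : ¬ IsUnit x := fun h => hBn (comp_unit_iff.mpr h)
    have hxyn : ¬ IsUnit (x + y - 1) := fun h => hB1n (comp1_unit_iff.mpr h)
    have hbn : ¬ IsUnit (-x : R) := fun h => hxn (by simpa using h.neg)
    have h1abn : ¬ IsUnit ((X ^ 2 + C (-y) * X + C (-x) : R[X]).eval 1) := by
      rw [quad_eval1]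
      intro h
      have h2 := h.neg
      rw [show -(1 + -y + -x) = x + y - 1 by abel] at h2
      exact hxyn h2
    have h0bn : ¬ IsUnit ((X ^ 2 + C (-y) * X + C (-x) : R[X]).eval 0) := by
      rw [quad_eval0]; exact hbn
    obtain ⟨g₀, g₁, h₀, h₁, hg₀, hg₁, hh₀, hh₁, hfg, hfh, hg₀0, hg₁1, hh₀0, hh₁1⟩ :=
      hFac (X ^ 2 + C (-y) * X + C (-x)) (quad_monic _ _) (quad_natDegree _ _)
    have hdg : g₀.natDegree = 1 ∧ g₁.natDegree = 1 := by
      have hsplitg : g₀.natDegree + g₁.natDegree = 2 := by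
        rw [← Polynomial.Monic.natDegree_mul hg₀ hg₁, ← hfg]
        exact quad_natDegree _ _
      by_cases e0 : g₀.natDegree = 0
      · exfalso
        have hg₀1 : g₀ = 1 := hg₀.natDegree_eq_zero.mp e0
        rw [hg₀1, one_mul] at hfg
        rw [← hfg] at hg₁1
        exact h1abn hg₁1
      by_cases e1 : g₁.natDegree = 0
      · exfalso
        have hg₁e : g₁ = 1 := hg₁.natDegree_eq_zero.mp e1
        rw [hg₁e, mul_one] at hfg
        rw [← hfg] at hg₀0
        exact h0bn hg₀0
      · omega
    have hdh : h₁.natDegree = 1 ∧ h₀.natDegree = 1 := by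
      have hsplith : h₁.natDegree + h₀.natDegree = 2 := by
        rw [← Polynomial.Monic.natDegree_mul hh₁ hh₀, ← hfh]
        exact quad_natDegree _ _
      by_cases e0 : h₁.natDegree = 0
      · exfalso
        have hh₁e : h₁ = 1 := hh₁.natDegree_eq_zero.mp e0
        rw [hh₁e, one_mul] at hfh
        rw [← hfh] at hh₀0
        exact h0bn hh₀0
      by_cases e1 : h₀.natDegree = 0
      · exfalso
        have hh₀e : h₀ = 1 := hh₀.natDegree_eq_zero.mp e1
        rw [hh₀e, mul_one] at hfh
        rw [← hfh] at hh₁1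
        exact h1abn hh₁1
      · omega
    have hg₀eq := hg₀.eq_X_add_C hdg.1
    have hg₁eq := hg₁.eq_X_add_C hdg.2
    have hh₁eq := hh₁.eq_X_add_C hdh.1
    have hh₀eq := hh₀.eq_X_add_C hdh.2
    have hexp := hfg
    rw [hg₀eq, hg₁eq, lin_mul] at hexp
    obtain ⟨hac, hbc⟩ := quad_coeffs hexp
    have hexp2 := hfh
    rw [hh₁eq, hh₀eq, lin_mul] at hexp2
    obtain ⟨had, hbd⟩ := quad_coeffs hexp2
    rw [hg₀eq, lin_eval0] at hg₀0
    rw [hh₀eq, lin_eval0] at hh₀0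
    have hc₁n : ¬ IsUnit (g₁.coeff 0) := fun h => hbn (by rw [hbc]; exact hg₀0.mul h)
    have hy1 : y = -(g₀.coeff 0 + g₁.coeff 0) := by rw [← hac, neg_neg]
    have hx1 : x = -(g₀.coeff 0 * g₁.coeff 0) := by rw [← hbc, neg_neg]
    have hy2 : y = -(h₁.coeff 0 + h₀.coeff 0) := by rw [← had, neg_neg]
    have hx2 : x = -(h₁.coeff 0 * h₀.coeff 0) := by rw [← hbd, neg_neg]
    have hroots : (-(g₁.coeff 0) - y) * (-(g₁.coeff 0)) = x := by
      rw [hy1, hx1]; noncomm_ring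
    have hrootp : (-(h₀.coeff 0) - y) * (-(h₀.coeff 0)) = x := by
      rw [hy2, hx2]; noncomm_ring
    exact comp_sc hroots hrootp (fun h => hc₁n (by simpa using h.neg)) hh₀0.neg
end

section
/- If R is a Henselian local ring (possibly noncommutative, with R/J(R) a field), then M₂(R) is strongly clean. -/
open Polynomial

private lemma schur2 {R : Type*} [Ring R] (a b c d u v : R)
    (hu1 : u * a = 1) (hu2 : a * u = 1)
    (hv1 : v * (d - c * u * b) = 1) (hv2 : (d - c * u * b) * v = 1) :
    IsUnit (!![a, b; c, d]) := by
  have e00 : a * (u + u*b*v*c*u) + b * -(v*c*u) = 1 := by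
    calc a * (u + u*b*v*c*u) + b * -(v*c*u)
        = a*u + (a*u)*(b*v*c*u) - b*(v*c*u) := by noncomm_ring
      _ = 1 := by rw [hu2]; noncomm_ring
  have e01 : a * -(u*b*v) + b * v = 0 := by
    calc a * -(u*b*v) + b * v = -((a*u)*(b*v)) + b*v := by noncomm_ring
      _ = 0 := by rw [hu2]; noncomm_ring
  have e10 : c * (u + u*b*v*c*u) + d * -(v*c*u) = 0 := by
    calc c * (u + u*b*v*c*u) + d * -(v*c*u)
        = c*u - ((d - c*u*b)*v)*(c*u) := by noncomm_ring
      _ = 0 := by rw [hv2]; noncomm_ring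
  have e11 : c * -(u*b*v) + d * v = 1 := by
    calc c * -(u*b*v) + d * v = (d - c*u*b)*v := by noncomm_ring
      _ = 1 := hv2
  have f00 : (u + u*b*v*c*u)*a + -(u*b*v)*c = 1 := by
    calc (u + u*b*v*c*u)*a + -(u*b*v)*c
        = u*a + (u*b*v*c)*(u*a) - u*b*v*c := by noncomm_ring
      _ = 1 := by rw [hu1]; noncomm_ring
  have f01 : (u + u*b*v*c*u)*b + -(u*b*v)*d = 0 := by
    calc (u + u*b*v*c*u)*b + -(u*b*v)*d
        = u*b - (u*b)*(v*(d - c*u*b)) := by noncomm_ring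
      _ = 0 := by rw [hv1]; noncomm_ring
  have f10 : -(v*c*u)*a + v*c = 0 := by
    calc -(v*c*u)*a + v*c = -((v*c)*(u*a)) + v*c := by noncomm_ring
      _ = 0 := by rw [hu1]; noncomm_ring
  have f11 : -(v*c*u)*b + v*d = 1 := by
    calc -(v*c*u)*b + v*d = v*(d - c*u*b) := by noncomm_ring
      _ = 1 := hv1
  exact ⟨⟨_, !![u + u*b*v*c*u, -(u*b*v); -(v*c*u), v],
    by rw [Matrix.mul_fin_two, e00, e01, e10, e11, Matrix.one_fin_two],
    by rw [Matrix.mul_fin_two, f00, f01, f10, f11, Matrix.one_fin_two]⟩, rfl⟩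

private lemma lift_unit {R K : Type*} [Ring R] [Field K] (π : R →+* K)
    (hsurj : Function.Surjective π) (hker : ∀ x : R, π x = 0 ↔ ¬ IsUnit x)
    (M : Matrix (Fin 2) (Fin 2) R) (h : IsUnit (M.map π)) : IsUnit M := by
  have hunit : ∀ x : R, π x ≠ 0 → IsUnit x := fun x hx => by
    by_contra hc; exact hx ((hker x).2 hc)
  have key : ∀ M : Matrix (Fin 2) (Fin 2) R, M.map π = 1 → IsUnit M := by
    intro M hM
    have hval : ∀ i j, π (M i j) = (1 : Matrix (Fin 2) (Fin 2) K) i j := fun i j => by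
      rw [← Matrix.map_apply (f := ⇑π), hM]
    have h00 : π (M 0 0) = 1 := by rw [hval]; simp
    have h01 : π (M 0 1) = 0 := by rw [hval]; simp [Matrix.one_apply]
    have h10 : π (M 1 0) = 0 := by rw [hval]; simp [Matrix.one_apply]
    have h11 : π (M 1 1) = 1 := by rw [hval]; simp
    obtain ⟨ua, hua⟩ := hunit (M 0 0) (by rw [h00]; exact one_ne_zero)
    have hu1 : (↑ua⁻¹ : R) * M 0 0 = 1 := by rw [← hua]; exact ua.inv_mul
    have hu2 : M 0 0 * (↑ua⁻¹ : R) = 1 := by rw [← hua]; exact ua.mul_inv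
    obtain ⟨us, hus⟩ := hunit (M 1 1 - M 1 0 * ↑ua⁻¹ * M 0 1) (by
      rw [_root_.map_sub, _root_.map_mul, _root_.map_mul, h10, h11, h01]; simp)
    have hv1 : (↑us⁻¹ : R) * (M 1 1 - M 1 0 * ↑ua⁻¹ * M 0 1) = 1 := by
      rw [← hus]; exact us.inv_mul
    have hv2 : (M 1 1 - M 1 0 * ↑ua⁻¹ * M 0 1) * (↑us⁻¹ : R) = 1 := by
      rw [← hus]; exact us.mul_inv
    rw [Matrix.eta_fin_two M]
    exact schur2 _ _ _ _ _ _ hu1 hu2 hv1 hv2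
  obtain ⟨V, hV⟩ := h
  set N : Matrix (Fin 2) (Fin 2) R :=
    Matrix.of fun i j => Classical.choose (hsurj ((↑V⁻¹ : Matrix (Fin 2) (Fin 2) K) i j)) with hNdef
  have hN : N.map π = ↑V⁻¹ := by
    ext i j; exact Classical.choose_spec (hsurj ((↑V⁻¹ : Matrix (Fin 2) (Fin 2) K) i j))
  have h1 : (M * N).map π = 1 := by
    rw [Matrix.map_mul, hN, ← hV, V.mul_inv]
  have h2 : (N * M).map π = 1 := by
    rw [Matrix.map_mul, hN, ← hV, V.inv_mul]
  obtain ⟨W1, hW1⟩ := key _ h1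
  obtain ⟨W2, hW2⟩ := key _ h2
  set r : Matrix (Fin 2) (Fin 2) R := N * (Units.val W1⁻¹) with hrdef
  set l : Matrix (Fin 2) (Fin 2) R := (Units.val W2⁻¹) * N with hldef
  have hr : M * r = 1 := by rw [hrdef, ← mul_assoc, ← hW1, W1.mul_inv]
  have hl : l * M = 1 := by rw [hldef, mul_assoc, ← hW2, W2.inv_mul]
  have heq : l = r := by
    rw [← mul_one l, ← hr, ← mul_assoc, hl, one_mul]
  exact ⟨⟨M, r, hr, by rw [← heq]; exact hl⟩, rfl⟩

private lemma exists_cyclic {K : Type*} [Field K] (Ab : Matrix (Fin 2) (Fin 2) K)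
    (h0 : Ab.det = 0) (h1 : (Ab - 1).det = 0) :
    ∃ vb : Fin 2 → K,
      vb 0 * (Ab.mulVec vb) 1 - (Ab.mulVec vb) 0 * vb 1 ≠ 0 := by
  obtain ⟨w0, hw0ne, hw0⟩ := (Matrix.exists_mulVec_eq_zero_iff).2 h0
  obtain ⟨w1, hw1ne, hw1'⟩ := (Matrix.exists_mulVec_eq_zero_iff).2 h1
  have hw1 : Ab.mulVec w1 = w1 := by
    rw [Matrix.sub_mulVec, Matrix.one_mulVec, sub_eq_zero] at hw1'
    exact hw1'
  refine ⟨w0 + w1, ?_⟩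
  have hAv : Ab.mulVec (w0 + w1) = w1 := by
    rw [Matrix.mulVec_add, hw0, hw1, zero_add]
  rw [hAv]
  simp only [Pi.add_apply]
  intro h
  have hcross : w0 0 * w1 1 - w1 0 * w0 1 = 0 := by linear_combination h
  obtain ⟨c, hc0, hc1⟩ : ∃ c : K, w0 0 = c * w1 0 ∧ w0 1 = c * w1 1 := by
    by_cases hw10 : w1 0 = 0
    · have hw11 : w1 1 ≠ 0 := by
        intro h'
        exact hw1ne (funext fun i => by fin_cases i <;> assumption)
      refine ⟨w0 1 / w1 1, ?_, by field_simp⟩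
      have hz : w0 0 * w1 1 = 0 := by linear_combination hcross + w0 1 * hw10
      rw [hw10, mul_zero]
      exact (mul_eq_zero.1 hz).resolve_right hw11
    · refine ⟨w0 0 / w1 0, by field_simp, ?_⟩
      field_simp
      linear_combination -hcross
  have hmul : ∀ i, c * w1 i = 0 := by
    intro i
    have h0i : Ab i 0 * w0 0 + Ab i 1 * w0 1 = 0 := by
      have := congrFun hw0 i
      simpa [Matrix.mulVec, dotProduct, Fin.sum_univ_two] using this
    have h1i : Ab i 0 * w1 0 + Ab i 1 * w1 1 = w1 i := by
      have := congrFun hw1 i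
      simpa [Matrix.mulVec, dotProduct, Fin.sum_univ_two] using this
    linear_combination (-c) * h1i + h0i - Ab i 0 * hc0 - Ab i 1 * hc1
  rcases eq_or_ne c 0 with hc | hc
  · exact hw0ne (funext fun i => by fin_cases i <;> simp [hc0, hc1, hc])
  · exact hw1ne (funext fun i => (mul_eq_zero.1 (hmul i)).resolve_left hc)

private lemma quad_coeffs_s15 {R : Type*} [Ring R] (p q a b : R)
    (hfact : (X^2 + (C p * X + C q) : R[X]) = (X + C a) * (X + C b)) :
    p = a + b ∧ q = a * b := by
  have hexp : ((X + C a) * (X + C b) : R[X]) = X^2 + (C (a+b) * X + C (a*b)) := by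
    rw [Polynomial.C_add, Polynomial.C_mul]
    calc ((X + C a) * (X + C b) : R[X]) = X*X + X*C b + (C a*X + C a*C b) := by noncomm_ring
      _ = X^2 + ((C a + C b)*X + C a*C b) := by rw [Polynomial.X_mul_C]; noncomm_ring
  rw [hexp] at hfact
  constructor
  · have := congrArg (fun t : R[X] => t.coeff 1) hfact
    simpa [Polynomial.coeff_add, Polynomial.coeff_C_mul, Polynomial.coeff_X_pow,
      Polynomial.coeff_C, Polynomial.coeff_X] using this
  · have := congrArg (fun t : R[X] => t.coeff 0) hfact
    simpa [Polynomial.coeff_add, Polynomial.coeff_C_mul, Polynomial.coeff_X_pow,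
      Polynomial.coeff_C, Polynomial.coeff_X] using this

private lemma stronglyClean_of_conj {S : Type*} [Ring S] {A T D : S} (hT : IsUnit T)
    (hAT : A * T = T * D) (h : IsStronglyClean D) : IsStronglyClean A := by
  obtain ⟨E, U, hE, hU, hDEU, hcomm⟩ := h
  obtain ⟨Tu, hTu⟩ := hT
  set T' : S := Units.val Tu⁻¹ with hT'def
  have hTT' : T * T' = 1 := by rw [hT'def, ← hTu]; exact Tu.mul_inv
  have hT'T : T' * T = 1 := by rw [hT'def, ← hTu]; exact Tu.inv_mul
  have hA : A = T * D * T' := by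
    rw [← hAT, mul_assoc, hTT', mul_one]
  have key : ∀ X Y : S, (T*X*T') * (T*Y*T') = T*(X*Y)*T' := by
    intro X Y
    rw [show (T*X*T') * (T*Y*T') = T*(X*((T'*T)*(Y*T'))) from by noncomm_ring, hT'T, one_mul]
    noncomm_ring
  refine ⟨T*E*T', T*U*T', ?_, ?_, ?_, ?_⟩
  · show (T*E*T') * (T*E*T') = T*E*T'
    rw [key, hE]
  · exact ((hTu ▸ Tu.isUnit).mul hU).mul (Tu⁻¹).isUnit
  · rw [hA, hDEU]; noncomm_ring
  · rw [key, key, hcomm]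

/-- If `R` is a Henselian local ring (possibly noncommutative) whose residue ring
`R/J(R)` is a field — here realized by a surjective ring homomorphism `π : R → K` onto a
field whose kernel is `J(R)`, the set of nonunits — then `M₂(R)` is strongly clean.
Henselian means: whenever the reduction of a monic `f ∈ R[t]` factors into coprime monic
`α, β` over `K`, there exist unique monic `g, h ∈ R[t]` with `f = gh`, `ḡ = α`, `h̄ = β`. -/
theorem matrix_two_stronglyClean_of_henselian {R K : Type*} [Ring R] [IsLocalRing R]
    [Field K] (π : R →+* K) (hsurj : Function.Surjective π)
    (hker : ∀ x : R, π x = 0 ↔ ¬ IsUnit x)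
    (hensel : ∀ f : R[X], f.Monic → ∀ α β : K[X], α.Monic → β.Monic → IsCoprime α β →
      f.map π = α * β →
      ∃! gh : R[X] × R[X], gh.1.Monic ∧ gh.2.Monic ∧ f = gh.1 * gh.2 ∧
        gh.1.map π = α ∧ gh.2.map π = β) :
    ∀ A : Matrix (Fin 2) (Fin 2) R, IsStronglyClean A := by
  intro A
  have hmapsub : (A - 1).map π = A.map π - 1 := by
    rw [Matrix.map_sub _ (fun a b => map_sub π a b), Matrix.map_one _ (map_zero π) (map_one π)]
  by_cases hc1 : IsUnit (A.map π)
  · exact ⟨0, A, IsIdempotentElem.zero, lift_unit π hsurj hker A hc1,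
      (zero_add A).symm, by rw [zero_mul, mul_zero]⟩
  by_cases hc2 : IsUnit (A.map π - 1)
  · exact ⟨1, A - 1, IsIdempotentElem.one,
      lift_unit π hsurj hker (A - 1) (by rw [hmapsub]; exact hc2),
      by noncomm_ring, by rw [one_mul, mul_one]⟩
  -- main case
  have hdet0 : (A.map π).det = 0 := by
    by_contra hd
    exact hc1 ((Matrix.isUnit_iff_isUnit_det _).2 (isUnit_iff_ne_zero.2 hd))
  have hdet1 : (A.map π - 1).det = 0 := by
    by_contra hd
    exact hc2 ((Matrix.isUnit_iff_isUnit_det _).2 (isUnit_iff_ne_zero.2 hd))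
  obtain ⟨vb, hvb⟩ := exists_cyclic (A.map π) hdet0 hdet1
  choose v hv using fun i => hsurj (vb i)
  set Av : Fin 2 → R := A.mulVec v with hAvdef
  set P : Matrix (Fin 2) (Fin 2) R := !![v 0, Av 0; v 1, Av 1] with hPdef
  have hPmap : P.map π = !![vb 0, (A.map π).mulVec vb 0; vb 1, (A.map π).mulVec vb 1] := by
    ext i j
    fin_cases i <;> fin_cases j <;>
      simp [hPdef, Matrix.map_apply, hv, hAvdef, Matrix.mulVec, dotProduct,
        Fin.sum_univ_two, map_add, map_mul]
  have hPunit : IsUnit P := by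
    apply lift_unit π hsurj hker
    rw [Matrix.isUnit_iff_isUnit_det, isUnit_iff_ne_zero, hPmap, Matrix.det_fin_two]
    simpa using hvb
  obtain ⟨Pu, hPu⟩ := hPunit
  set P' : Matrix (Fin 2) (Fin 2) R := Units.val Pu⁻¹ with hP'def
  have hPP' : P * P' = 1 := by rw [hP'def, ← hPu]; exact Pu.mul_inv
  set w : Fin 2 → R := P'.mulVec (A.mulVec Av) with hwdef
  have hPw : P.mulVec w = A.mulVec Av := by
    rw [hwdef, Matrix.mulVec_mulVec, hPP', Matrix.one_mulVec]
  have hPw0 : v 0 * w 0 + Av 0 * w 1 = A.mulVec Av 0 := by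
    have := congrFun hPw 0
    simpa [hPdef, Matrix.mulVec, dotProduct, Fin.sum_univ_two] using this
  have hPw1 : v 1 * w 0 + Av 1 * w 1 = A.mulVec Av 1 := by
    have := congrFun hPw 1
    simpa [hPdef, Matrix.mulVec, dotProduct, Fin.sum_univ_two] using this
  set Cm : Matrix (Fin 2) (Fin 2) R := !![0, w 0; 1, w 1] with hCmdef
  have hAP : A * P = P * Cm := by
    ext i j
    fin_cases i <;> fin_cases j <;>
      simp [hCmdef, hPdef, Matrix.mul_apply, Fin.sum_univ_two, hAvdef,
        Matrix.mulVec, dotProduct]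
    · simpa [hPdef, hAvdef, Matrix.mulVec, dotProduct, Fin.sum_univ_two] using
        (congrFun hPw 0).symm
    · simpa [hPdef, hAvdef, Matrix.mulVec, dotProduct, Fin.sum_univ_two] using
        (congrFun hPw 1).symm
  have hAPmap : (A.map π) * (P.map π) = (P.map π) * (Cm.map π) := by
    rw [← Matrix.map_mul, ← Matrix.map_mul, hAP]
  have hdetPmap : (P.map π).det ≠ 0 := by
    rw [hPmap, Matrix.det_fin_two]; simpa using hvb
  have hdetCm : (Cm.map π).det = 0 := by
    have hdd := congrArg Matrix.det hAPmap
    rw [Matrix.det_mul, Matrix.det_mul, hdet0, zero_mul] at hdd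
    rcases mul_eq_zero.1 hdd.symm with hz | hz
    · exact absurd hz hdetPmap
    · exact hz
  have hq0 : π (w 0) = 0 := by
    have h' := hdetCm
    rw [hCmdef] at h'
    simpa [Matrix.det_fin_two, Matrix.map_apply] using h'
  have hdetCm1 : (Cm.map π - 1).det = 0 := by
    have hsub : (A.map π - 1) * (P.map π) = (P.map π) * (Cm.map π - 1) := by
      rw [sub_mul, mul_sub, hAPmap, one_mul, mul_one]
    have hdd := congrArg Matrix.det hsub
    rw [Matrix.det_mul, Matrix.det_mul, hdet1, zero_mul] at hdd
    rcases mul_eq_zero.1 hdd.symm with hz | hz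
    · exact absurd hz hdetPmap
    · exact hz
  have hp1 : π (w 1) = 1 := by
    have h' := hdetCm1
    rw [hCmdef] at h'
    simp [Matrix.det_fin_two, Matrix.map_apply, Matrix.sub_apply, Matrix.one_apply] at h'
    linear_combination -h' - hq0
  -- the characteristic-like polynomial
  set f : R[X] := X^2 + (Polynomial.C (-(w 1)) * X + Polynomial.C (-(w 0))) with hfdef
  have hfM : f.Monic := by
    rw [hfdef]
    exact Polynomial.monic_X_pow_add
      (lt_of_le_of_lt Polynomial.degree_linear_le (by norm_num))
  have hfmap : f.map π = X * (X - 1) := by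
    rw [hfdef]
    have hstep : ((X ^ 2 + (C (-(w 1)) * X + C (-(w 0))) : R[X])).map π
        = X ^ 2 + (C (π (-(w 1))) * X + C (π (-(w 0)))) := by
      simp [Polynomial.map_add, Polynomial.map_pow, Polynomial.map_mul,
        Polynomial.map_X, Polynomial.map_C]
    rw [hstep]
    simp only [map_neg, hp1, hq0, neg_zero, Polynomial.C_0, Polynomial.C_neg, Polynomial.C_1]
    ring
  have hX1monic : (X - 1 : K[X]).Monic := by
    simpa using Polynomial.monic_X_sub_C (1 : K)
  have hX1deg : (X - 1 : K[X]).natDegree = 1 := by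
    simpa using Polynomial.natDegree_X_sub_C (1 : K)
  have hcop : IsCoprime (X : K[X]) (X - 1) := ⟨1, -1, by ring⟩
  obtain ⟨⟨g, h⟩, ⟨hgM, hhM, hfgh, hgmap, hhmap⟩, -⟩ :=
    hensel f hfM X (X - 1) Polynomial.monic_X hX1monic hcop hfmap
  obtain ⟨⟨g', h'⟩, ⟨hg'M, hh'M, hfgh', hg'map, hh'map⟩, -⟩ :=
    hensel f hfM (X - 1) X hX1monic Polynomial.monic_X hcop.symm (by rw [hfmap]; ring)
  have hgX : g = X + Polynomial.C (g.coeff 0) :=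
    hgM.eq_X_add_C (by rw [← hgM.natDegree_map π, hgmap, Polynomial.natDegree_X])
  have hhX : h = X + Polynomial.C (h.coeff 0) :=
    hhM.eq_X_add_C (by rw [← hhM.natDegree_map π, hhmap, hX1deg])
  have hg'X : g' = X + Polynomial.C (g'.coeff 0) :=
    hg'M.eq_X_add_C (by rw [← hg'M.natDegree_map π, hg'map, hX1deg])
  have hh'X : h' = X + Polynomial.C (h'.coeff 0) :=
    hh'M.eq_X_add_C (by rw [← hh'M.natDegree_map π, hh'map, Polynomial.natDegree_X])
  have hπa : π (g.coeff 0) = 0 := by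
    have := congrArg (fun t : K[X] => t.coeff 0) hgmap
    simpa [Polynomial.coeff_map] using this
  have hπb : π (h.coeff 0) = -1 := by
    have := congrArg (fun t : K[X] => t.coeff 0) hhmap
    simpa [Polynomial.coeff_map] using this
  have hπa' : π (g'.coeff 0) = -1 := by
    have := congrArg (fun t : K[X] => t.coeff 0) hg'map
    simpa [Polynomial.coeff_map] using this
  have hπb' : π (h'.coeff 0) = 0 := by
    have := congrArg (fun t : K[X] => t.coeff 0) hh'map
    simpa [Polynomial.coeff_map] using this
  obtain ⟨hpab, hqab⟩ := quad_coeffs_s15 (-(w 1)) (-(w 0)) (g.coeff 0) (h.coeff 0)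
    (by rw [← hfdef, hfgh, ← hgX, ← hhX])
  obtain ⟨hpab', hqab'⟩ := quad_coeffs_s15 (-(w 1)) (-(w 0)) (g'.coeff 0) (h'.coeff 0)
    (by rw [← hfdef, hfgh', ← hg'X, ← hh'X])
  have hw1ab : w 1 = -(g.coeff 0 + h.coeff 0) := by rw [← hpab, neg_neg]
  have hw0ab : w 0 = -(g.coeff 0 * h.coeff 0) := by rw [← hqab, neg_neg]
  have hw1ab' : w 1 = -(g'.coeff 0 + h'.coeff 0) := by rw [← hpab', neg_neg]
  have hw0ab' : w 0 = -(g'.coeff 0 * h'.coeff 0) := by rw [← hqab', neg_neg]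
  set Q : Matrix (Fin 2) (Fin 2) R := !![g.coeff 0, g'.coeff 0; 1, 1] with hQdef
  set D : Matrix (Fin 2) (Fin 2) R := !![-(h.coeff 0), 0; 0, -(h'.coeff 0)] with hDdef
  have hCmQ : Cm * Q = Q * D := by
    ext i j
    fin_cases i <;> fin_cases j <;>
      simp [hCmdef, hQdef, hDdef, Matrix.mul_apply, Fin.sum_univ_two]
    · exact hw0ab
    · exact hw0ab'
    · rw [hw1ab]; abel
    · rw [hw1ab']; abel
  have hQunit : IsUnit Q := by
    apply lift_unit π hsurj hker
    rw [Matrix.isUnit_iff_isUnit_det, isUnit_iff_ne_zero, hQdef]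
    simp [Matrix.det_fin_two, Matrix.map_apply, hπa, hπa']
  have hDclean : IsStronglyClean D := by
    refine ⟨!![0, 0; 0, 1], !![-(h.coeff 0), 0; 0, -(h'.coeff 0) - 1], ?_, ?_, ?_, ?_⟩
    · show (!![(0:R), 0; 0, 1] : Matrix (Fin 2) (Fin 2) R) * _ = _
      rw [Matrix.mul_fin_two]; norm_num
    · apply lift_unit π hsurj hker
      rw [Matrix.isUnit_iff_isUnit_det, isUnit_iff_ne_zero]
      simp [Matrix.det_fin_two, Matrix.map_apply, hπb, hπb']
    · rw [hDdef]
      ext i j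
      fin_cases i <;> fin_cases j <;> simp
    · rw [Matrix.mul_fin_two, Matrix.mul_fin_two]
      norm_num
  have hPunit : IsUnit P := ⟨Pu, hPu⟩
  have hAT : A * (P * Q) = (P * Q) * D := by
    rw [← mul_assoc, hAP, mul_assoc, hCmQ, ← mul_assoc]
  exact stronglyClean_of_conj (hPunit.mul hQunit) hAT hDclean
end

section
/- Let R be a local ring and A ∈ M₂(R). If A is not in M₂(J(R)) and A is not invertible, then A is similar to a companion matrix [[0, w],[1, r]] with w ∈ J(R) and r ∈ R. -/
namespace SimilarCompanionAux

variable {R : Type*} [Ring R] [IsLocalRing R]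

/-- In a local ring, a right inverse makes an element a unit. -/
lemma isUnit_of_mul_eq_one' {a b : R} (h : a * b = 1) : IsUnit a := by
  rcases IsLocalRing.isUnit_or_isUnit_of_add_one (a := b * a) (b := 1 - b * a)
      (by noncomm_ring) with he | he
  · have hid : (b * a) * (b * a) = (b * a) * 1 := by
      calc (b * a) * (b * a) = b * ((a * b) * a) := by noncomm_ring
      _ = (b * a) * 1 := by rw [h]; noncomm_ring
    have h1 : b * a = 1 := he.mul_left_cancel hid
    exact ⟨⟨a, b, h, h1⟩, rfl⟩
  · have h0 : a * (1 - b * a) = 0 := by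
      calc a * (1 - b * a) = a - (a * b) * a := by noncomm_ring
      _ = 0 := by rw [h]; noncomm_ring
    have ha : a = 0 := by
      calc a = a * ((1 - b * a) * ↑he.unit⁻¹) := by rw [he.mul_val_inv, mul_one]
      _ = (a * (1 - b * a)) * ↑he.unit⁻¹ := by rw [mul_assoc]
      _ = 0 := by rw [h0, zero_mul]
    have h10 : (1 : R) = 0 := by rw [← h, ha, zero_mul]
    have : Subsingleton R := subsingleton_of_zero_eq_one h10.symm
    exact isUnit_of_subsingleton a

lemma isUnit_left_of_mul {a b : R} (h : IsUnit (a * b)) : IsUnit a :=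
  isUnit_of_mul_eq_one' (b := b * ↑h.unit⁻¹) (by rw [← mul_assoc]; exact h.mul_val_inv)

lemma not_isUnit_add {x y : R} (hx : ¬ IsUnit x) (hy : ¬ IsUnit y) : ¬ IsUnit (x + y) := by
  intro h
  have h1 : x * ↑h.unit⁻¹ + y * ↑h.unit⁻¹ = 1 := by rw [← add_mul]; exact h.mul_val_inv
  rcases IsLocalRing.isUnit_or_isUnit_of_add_one h1 with hu | hu
  · exact hx (isUnit_left_of_mul hu)
  · exact hy (isUnit_left_of_mul hu)

lemma isUnit_add_of_not {u x : R} (hu : IsUnit u) (hx : ¬ IsUnit x) : IsUnit (u + x) := by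
  by_contra h
  have hnx : ¬ IsUnit (-x) := fun h' => hx (by simpa using h')
  have := not_isUnit_add h hnx
  simp only [add_neg_cancel_right] at this
  exact this hu

/-- If `w` is a unit, the companion matrix `!![0,w;1,r]` is a unit. -/
lemma companion_isUnit {w r : R} (hw : IsUnit w) :
    IsUnit (!![0, w; 1, r] : Matrix (Fin 2) (Fin 2) R) := by
  refine ⟨⟨!![0, w; 1, r], !![-(r * ↑hw.unit⁻¹), 1; ↑hw.unit⁻¹, 0], ?_, ?_⟩, rfl⟩ <;>
  · ext i j
    fin_cases i <;> fin_cases j <;>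
      simp [Matrix.mul_apply, Fin.sum_univ_two, hw.mul_val_inv, mul_assoc, hw.val_inv_mul]

lemma upper_isUnit {a c : R} (hc : IsUnit c) :
    IsUnit (!![1, a; 0, c] : Matrix (Fin 2) (Fin 2) R) := by
  have h1 : c * ↑hc.unit⁻¹ = 1 := hc.mul_val_inv
  have h2 : ↑hc.unit⁻¹ * c = 1 := hc.val_inv_mul
  refine ⟨⟨_, !![1, -(a * ↑hc.unit⁻¹); 0, ↑hc.unit⁻¹], ?_, ?_⟩, rfl⟩ <;>
  · ext i j
    fin_cases i <;> fin_cases j <;>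
      simp [Matrix.mul_apply, Fin.sum_univ_two, h1, h2, mul_assoc]

lemma tri_isUnit {a b : R} (hs : IsUnit (b - a)) :
    IsUnit (!![1, a; 1, b] : Matrix (Fin 2) (Fin 2) R) := by
  set si : R := ↑hs.unit⁻¹ with hsi
  have h1 : (b - a) * si = 1 := hs.mul_val_inv
  have h2 : si * (b - a) = 1 := hs.val_inv_mul
  have h1' : b * si - a * si = 1 := by rw [← sub_mul, h1]
  have h2' : si * b - si * a = 1 := by rw [← mul_sub, h2]
  refine ⟨⟨_, !![1 + a * si, -(a * si); -si, si], ?_, ?_⟩, rfl⟩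
  · ext i j
    fin_cases i <;> fin_cases j <;>
      simp [Matrix.mul_apply, Fin.sum_univ_two]
    · rw [← h1']; noncomm_ring
    · rw [← h1']; noncomm_ring
  · ext i j
    fin_cases i <;> fin_cases j <;>
      simp [Matrix.mul_apply, Fin.sum_univ_two]
    · have hh : a * (si * b - si * a) = a := by rw [h2', mul_one]
      calc (1 + a * si) * a + -(a * si * b)
          = a - a * (si * b - si * a) := by noncomm_ring
        _ = 0 := by rw [hh, sub_self]
    · rw [← h2']; noncomm_ring

/-- If both diagonal entries are units and both off-diagonal entries are nonunits,
then `A` is a unit. -/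
lemma diag_isUnit (A : Matrix (Fin 2) (Fin 2) R)
    (h00 : IsUnit (A 0 0)) (h11 : IsUnit (A 1 1))
    (h01 : ¬ IsUnit (A 0 1)) (h10 : ¬ IsUnit (A 1 0)) : IsUnit A := by
  set u := A 0 0; set x := A 0 1; set y := A 1 0; set v := A 1 1
  set ui : R := ↑h00.unit⁻¹ with hui
  have hu1 : u * ui = 1 := h00.mul_val_inv
  have hu2 : ui * u = 1 := h00.val_inv_mul
  have hs : IsUnit (v + -(y * ui * x)) := by
    refine isUnit_add_of_not h11 ?_
    rw [IsUnit.neg_iff]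
    intro h
    exact h10 (isUnit_left_of_mul (isUnit_left_of_mul (by rwa [mul_assoc] at h)))
  set s : R := v + -(y * ui * x) with hsdef
  set si : R := ↑hs.unit⁻¹ with hsi
  have hs1 : s * si = 1 := hs.mul_val_inv
  have hs2 : si * s = 1 := hs.val_inv_mul
  have hL : IsUnit (!![1, 0; y * ui, 1] : Matrix (Fin 2) (Fin 2) R) := by
    refine ⟨⟨_, !![1, 0; -(y * ui), 1], ?_, ?_⟩, rfl⟩ <;>
    · ext i j; fin_cases i <;> fin_cases j <;> simp [Matrix.mul_apply, Fin.sum_univ_two]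
  have hU : IsUnit (!![1, ui * x; 0, 1] : Matrix (Fin 2) (Fin 2) R) := by
    refine ⟨⟨_, !![1, -(ui * x); 0, 1], ?_, ?_⟩, rfl⟩ <;>
    · ext i j; fin_cases i <;> fin_cases j <;> simp [Matrix.mul_apply, Fin.sum_univ_two]
  have hD : IsUnit (!![u, 0; 0, s] : Matrix (Fin 2) (Fin 2) R) := by
    refine ⟨⟨_, !![ui, 0; 0, si], ?_, ?_⟩, rfl⟩ <;>
    · ext i j; fin_cases i <;> fin_cases j <;>
        simp [Matrix.mul_apply, Fin.sum_univ_two, hu1, hu2, hs1, hs2]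
  have hfac : A = !![1, 0; y * ui, 1] * !![u, 0; 0, s] * !![1, ui * x; 0, 1] := by
    ext i j
    fin_cases i <;> fin_cases j <;>
      simp [Matrix.mul_apply, Fin.sum_univ_two, hsdef]
    · rfl
    · show x = u * (ui * x)
      rw [← mul_assoc, hu1, one_mul]
    · show y = y * ui * u
      rw [mul_assoc, hu2, mul_one]
    · show v = y * ui * u * (ui * x) + (v + -(y * ui * x))
      rw [mul_assoc y ui u, hu2, mul_one]
      noncomm_ring
  rw [hfac]
  exact (hL.mul hD).mul hU

/-- Key step: if `P` is invertible and the first column of `A*P` is the second column of `P`,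
then `A` is similar (via `P`) to a companion matrix. -/
lemma key (A : Matrix (Fin 2) (Fin 2) R) (hA' : ¬ IsUnit A)
    (P : (Matrix (Fin 2) (Fin 2) R)ˣ)
    (h0 : (A * P.val) 0 0 = P.val 0 1) (h1 : (A * P.val) 1 0 = P.val 1 1) :
    ∃ (w r : R), ¬ IsUnit w ∧ A = P.val * !![0, w; 1, r] * (P⁻¹).val := by
  set C : Matrix (Fin 2) (Fin 2) R := (P⁻¹).val * A * P.val with hC
  have hcol : ∀ i, C i 0 = ((P⁻¹).val * P.val) i 1 := by
    intro i
    have h : C i 0 = (P⁻¹).val i 0 * (A * P.val) 0 0 + (P⁻¹).val i 1 * (A * P.val) 1 0 := by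
      rw [hC, mul_assoc, Matrix.mul_apply, Fin.sum_univ_two]
    rw [h, h0, h1, Matrix.mul_apply, Fin.sum_univ_two]
  have hPP : (P⁻¹).val * P.val = 1 := P.inv_mul
  have hc0 : C 0 0 = 0 := by rw [hcol 0, hPP]; simp [Matrix.one_apply]
  have hc1 : C 1 0 = 1 := by rw [hcol 1, hPP]; simp [Matrix.one_apply]
  have hCeq : C = !![0, C 0 1; 1, C 1 1] := by
    ext i j; fin_cases i <;> fin_cases j <;> simp [hc0, hc1]
  have hAeq : A = P.val * C * (P⁻¹).val := by
    rw [hC]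
    calc A = (P.val * (P⁻¹).val) * A * (P.val * (P⁻¹).val) := by rw [P.mul_inv]; simp
    _ = P.val * ((P⁻¹).val * A * P.val) * (P⁻¹).val := by noncomm_ring
  refine ⟨C 0 1, C 1 1, ?_, by rw [← hCeq]; exact hAeq⟩
  intro hw
  apply hA'
  have hCU : IsUnit C := hCeq ▸ companion_isUnit hw
  rw [hAeq]
  exact (P.isUnit.mul hCU).mul (P⁻¹).isUnit

end SimilarCompanionAux

open SimilarCompanionAux in
/-- Let `R` be a local ring (where `J(R)` is the set of nonunits) and `A ∈ M₂(R)`.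
If `A` has some entry outside `J(R)` and `A` is not invertible, then `A` is similar to a
companion matrix `[[0, w],[1, r]]` with `w ∈ J(R)` and `r ∈ R`. -/
theorem similar_companion_of_not_radical_not_unit {R : Type*} [Ring R] [IsLocalRing R]
    (A : Matrix (Fin 2) (Fin 2) R)
    (hA : ¬ (∀ i j, ¬ IsUnit (A i j))) (hA' : ¬ IsUnit A) :
    ∃ (w r : R) (P : (Matrix (Fin 2) (Fin 2) R)ˣ),
      ¬ IsUnit w ∧ A = P.val * !![0, w; 1, r] * (P⁻¹).val := by
  push_neg at hA
  obtain ⟨i, j, hij⟩ := hA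
  by_cases h10 : IsUnit (A 1 0)
  · have hP := upper_isUnit (a := A 0 0) h10
    obtain ⟨w, r, hw, heq⟩ := key A hA' hP.unit
      (by simp [hP.unit_spec, Matrix.mul_apply, Fin.sum_univ_two])
      (by simp [hP.unit_spec, Matrix.mul_apply, Fin.sum_univ_two])
    exact ⟨w, r, hP.unit, hw, heq⟩
  by_cases h01 : IsUnit (A 0 1)
  · have hP := companion_isUnit (r := A 1 1) h01
    obtain ⟨w, r, hw, heq⟩ := key A hA' hP.unit
      (by simp [hP.unit_spec, Matrix.mul_apply, Fin.sum_univ_two])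
      (by simp [hP.unit_spec, Matrix.mul_apply, Fin.sum_univ_two])
    exact ⟨w, r, hP.unit, hw, heq⟩
  · have hd : IsUnit (A 0 0) ∨ IsUnit (A 1 1) := by
      fin_cases i <;> fin_cases j
      · exact Or.inl hij
      · exact absurd hij h01
      · exact absurd hij h10
      · exact Or.inr hij
    have hs : IsUnit ((A 1 0 + A 1 1) - (A 0 0 + A 0 1)) := by
      rcases hd with h00 | h11
      · have h11 : ¬ IsUnit (A 1 1) := fun h => hA' (diag_isUnit A h00 h h01 h10)
        have hkey : IsUnit ((-(A 0 0)) + (A 1 0 + (A 1 1 + -(A 0 1)))) :=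
          isUnit_add_of_not h00.neg
            (not_isUnit_add h10 (not_isUnit_add h11 (fun h => h01 (by simpa using h))))
        have heq : (A 1 0 + A 1 1) - (A 0 0 + A 0 1)
            = (-(A 0 0)) + (A 1 0 + (A 1 1 + -(A 0 1))) := by noncomm_ring
        rwa [heq]
      · have h00 : ¬ IsUnit (A 0 0) := fun h => hA' (diag_isUnit A h h11 h01 h10)
        have hkey : IsUnit (A 1 1 + (A 1 0 + (-(A 0 0) + -(A 0 1)))) :=
          isUnit_add_of_not h11
            (not_isUnit_add h10 (not_isUnit_add (fun h => h00 (by simpa using h))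
              (fun h => h01 (by simpa using h))))
        have heq : (A 1 0 + A 1 1) - (A 0 0 + A 0 1)
            = A 1 1 + (A 1 0 + (-(A 0 0) + -(A 0 1))) := by noncomm_ring
        rwa [heq]
    have hP := tri_isUnit hs
    obtain ⟨w, r, hw, heq⟩ := key A hA' hP.unit
      (by simp [hP.unit_spec, Matrix.mul_apply, Fin.sum_univ_two])
      (by simp [hP.unit_spec, Matrix.mul_apply, Fin.sum_univ_two])
    exact ⟨w, r, hP.unit, hw, heq⟩
end
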